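/- arXiv:1311.5004 — 5 statements merged into one kernel-verified Lean document; each statement's English description precedes it below -/
import Mathlib

section
/- Let K ∈ (-1,1), b : ℝ → ℝ satisfy b' = √(1 - K cos(2b)), b(0) = 0, and let W > 0 satisfy b(W) = π. Then for all v ∈ ℝ, b(v + W) = b(v) + π. -/
open Real Set

theorem helicoid_b_quasiperiodic
    (K : ℝ) (hK : K ∈ Set.Ioo (-1 : ℝ) 1) (b : ℝ → ℝ)
    (hb : ∀ v : ℝ, HasDerivAt b (Real.sqrt (1 - K * Real.cos (2 * b v))) v)
    (hb0 : b 0 = 0) (W : ℝ) (hW : 0 < W) (hbW : b W = Real.pi) :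
    ∀ v : ℝ, b (v + W) = b v + Real.pi := by
  have hKabs : |K| < 1 := abs_lt.2 ⟨hK.1, hK.2⟩
  have hpos : ∀ y : ℝ, 1 - |K| ≤ 1 - K * Real.cos (2 * y) := by
    intro y
    have h1 : K * Real.cos (2 * y) ≤ |K| := by
      calc K * Real.cos (2 * y) ≤ |K * Real.cos (2 * y)| := le_abs_self _
        _ = |K| * |Real.cos (2 * y)| := abs_mul _ _
        _ ≤ |K| * 1 := by
            exact mul_le_mul_of_nonneg_left (Real.abs_cos_le_one _) (abs_nonneg _)
        _ = |K| := mul_one _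
    linarith
  have hppos : (0:ℝ) < 1 - |K| := by linarith
  have hne : ∀ y : ℝ, 1 - K * Real.cos (2 * y) ≠ 0 := by
    intro y
    have := hpos y
    have : (0:ℝ) < 1 - K * Real.cos (2 * y) := by linarith
    exact ne_of_gt this
  -- the vector field
  set F : ℝ → ℝ := fun y => Real.sqrt (1 - K * Real.cos (2 * y)) with hF
  have hderivF : ∀ y : ℝ, HasDerivAt F
      ((K * (Real.sin (2 * y) * 2)) / (2 * Real.sqrt (1 - K * Real.cos (2 * y)))) y := by
    intro y
    have h1 : HasDerivAt (fun z : ℝ => 1 - K * Real.cos (2 * z))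
        (K * (Real.sin (2 * y) * 2)) y := by
      have h2 : HasDerivAt (fun z : ℝ => 2 * z) 2 y := by
        simpa using (hasDerivAt_id y).const_mul 2
      have hc : HasDerivAt (fun z : ℝ => Real.cos (2 * z))
          (-Real.sin (2 * y) * 2) y := by
        have := (Real.hasDerivAt_cos (2 * y)).comp y h2
        simpa [Function.comp_def] using this
      have := ((hc.const_mul K).const_sub 1)
      simpa [mul_comm, mul_assoc, mul_left_comm, neg_mul, mul_neg] using this
    exact h1.sqrt (hne y)
  -- Lipschitz constant
  set C : NNReal := ⟨|K| / Real.sqrt (1 - |K|), by positivity⟩ with hC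
  have hlip : LipschitzWith C F := by
    apply lipschitzWith_of_nnnorm_deriv_le (fun y => (hderivF y).differentiableAt)
    intro y
    rw [(hderivF y).deriv]
    rw [← NNReal.coe_le_coe, coe_nnnorm, Real.norm_eq_abs]
    have hsq : Real.sqrt (1 - |K|) ≤ Real.sqrt (1 - K * Real.cos (2 * y)) :=
      Real.sqrt_le_sqrt (hpos y)
    have hsqpos : 0 < Real.sqrt (1 - |K|) := Real.sqrt_pos.2 hppos
    have hsqpos' : 0 < Real.sqrt (1 - K * Real.cos (2 * y)) := lt_of_lt_of_le hsqpos hsq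
    rw [abs_div]
    have hnum : |K * (Real.sin (2 * y) * 2)| ≤ |K| * 2 := by
      rw [abs_mul, abs_mul, abs_two]
      have : |Real.sin (2 * y)| ≤ 1 := Real.abs_sin_le_one _
      nlinarith [abs_nonneg K, abs_nonneg (Real.sin (2*y))]
    have hden : |2 * Real.sqrt (1 - K * Real.cos (2 * y))|
        = 2 * Real.sqrt (1 - K * Real.cos (2 * y)) := abs_of_pos (by positivity)
    rw [hden]
    show _ ≤ |K| / Real.sqrt (1 - |K|)
    rw [div_le_div_iff₀ (by positivity) hsqpos]
    calc |K * (Real.sin (2 * y) * 2)| * Real.sqrt (1 - |K|)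
        ≤ (|K| * 2) * Real.sqrt (1 - K * Real.cos (2 * y)) := by
          apply mul_le_mul hnum hsq hsqpos.le (by positivity)
      _ = |K| * (2 * Real.sqrt (1 - K * Real.cos (2 * y))) := by ring
  -- the shifted solution
  set g : ℝ → ℝ := fun t => b (t + W) - Real.pi with hg
  have hg' : ∀ t : ℝ, HasDerivAt g (F (g t)) t := by
    intro t
    have h1 : HasDerivAt (fun s : ℝ => b (s + W))
        (Real.sqrt (1 - K * Real.cos (2 * b (t + W)))) t := by
      have := (hb (t + W)).comp t ((hasDerivAt_id t).add_const W)
      simpa [Function.comp_def] using this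
    have h2 : Real.cos (2 * b (t + W)) = Real.cos (2 * g t) := by
      have : (2 : ℝ) * b (t + W) = 2 * g t + 2 * Real.pi := by
        simp [hg]; ring
      rw [this, Real.cos_add_two_pi]
    have := h1.sub_const Real.pi
    rw [h2] at this
    exact this
  have hbF : ∀ t : ℝ, HasDerivAt b (F (b t)) t := hb
  have heq0 : b 0 = g 0 := by simp [hg, hbW, hb0]
  intro v
  have key : b v = g v := by
    have hmem : (0:ℝ) ∈ Ioo (-(|v| + 1)) (|v| + 1) := by
      constructor <;> [nlinarith [abs_nonneg v]; nlinarith [abs_nonneg v]]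
    have hvmem : v ∈ Ioo (-(|v| + 1)) (|v| + 1) := by
      constructor
      · nlinarith [neg_abs_le v]
      · nlinarith [le_abs_self v]
    have := ODE_solution_unique_of_mem_Ioo
      (v := fun _ : ℝ => F) (s := fun _ : ℝ => (univ : Set ℝ))
      (fun _ _ => hlip.lipschitzOnWith) hmem
      (f := b) (g := g)
      (fun t _ => ⟨hbF t, mem_univ _⟩)
      (fun t _ => ⟨hg' t, mem_univ _⟩)
      heq0
    exact this hvmem
  have : b v = b (v + W) - Real.pi := key
  linarith
end

section
/- Let K ∈ (-1,1)\{0}, b satisfy b' = √(1 - K cos(2b)), b(0)=0, and define x₃ : ℝ → ℝ by x₃' = K/(1+b'), x₃(0) = 0. Then x₃ satisfies x₃'(v) = (1 - b'(v))/cos(2b(v)) at every v where cos(2b(v)) ≠ 0, x₃ is odd, and x₃(v + W) = x₃(v) + x₃(W) for all v, where W > 0 is the number with b(W) = π. -/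
open Real Set

lemma cos_lip' (x y : ℝ) : |Real.cos x - Real.cos y| ≤ |x - y| := by
  rw [Real.cos_sub_cos]
  have h1 : |Real.sin ((x + y) / 2)| ≤ 1 :=
    abs_le.mpr ⟨Real.neg_one_le_sin _, Real.sin_le_one _⟩
  have h2 : |Real.sin ((x - y) / 2)| ≤ |(x - y) / 2| := Real.abs_sin_le_abs
  calc |(-2) * Real.sin ((x + y) / 2) * Real.sin ((x - y) / 2)|
      = 2 * (|Real.sin ((x + y) / 2)| * |Real.sin ((x - y) / 2)|) := by
        rw [abs_mul, abs_mul]; simp [abs_of_nonneg]; ring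
    _ ≤ 2 * (1 * |(x - y) / 2|) := by gcongr
    _ = |x - y| := by rw [one_mul, abs_div, abs_two]; ring

lemma field_lip (K : ℝ) (hK1 : |K| < 1) :
    LipschitzWith (Real.toNNReal (|K| / Real.sqrt (1 - |K|)))
      (fun y : ℝ => Real.sqrt (1 - K * Real.cos (2 * y))) := by
  have hε : (0:ℝ) < 1 - |K| := by linarith
  have hsε : (0:ℝ) < Real.sqrt (1 - |K|) := Real.sqrt_pos.mpr hε
  rw [lipschitzWith_iff_dist_le_mul]
  intro x y
  simp only [Real.dist_eq]
  set a := 1 - K * Real.cos (2 * x) with ha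
  set c := 1 - K * Real.cos (2 * y) with hc
  have hbound : ∀ z : ℝ, 1 - |K| ≤ 1 - K * Real.cos (2 * z) := by
    intro z
    have : K * Real.cos (2 * z) ≤ |K| := by
      calc K * Real.cos (2 * z) ≤ |K * Real.cos (2 * z)| := le_abs_self _
        _ = |K| * |Real.cos (2 * z)| := abs_mul _ _
        _ ≤ |K| * 1 := by gcongr; exact abs_le.mpr ⟨Real.neg_one_le_cos _, Real.cos_le_one _⟩
        _ = |K| := mul_one _
    linarith
  have hax : 1 - |K| ≤ a := hbound x
  have hcy : 1 - |K| ≤ c := hbound y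
  have hsa : Real.sqrt (1 - |K|) ≤ Real.sqrt a := Real.sqrt_le_sqrt hax
  have hsc : Real.sqrt (1 - |K|) ≤ Real.sqrt c := Real.sqrt_le_sqrt hcy
  have hsum : 2 * Real.sqrt (1 - |K|) ≤ Real.sqrt a + Real.sqrt c := by linarith
  have hprod : |Real.sqrt a - Real.sqrt c| * (Real.sqrt a + Real.sqrt c) = |a - c| := by
    have h1 : (Real.sqrt a - Real.sqrt c) * (Real.sqrt a + Real.sqrt c) = a - c := by
      have := Real.sq_sqrt (le_trans hε.le hax)
      have := Real.sq_sqrt (le_trans hε.le hcy)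
      nlinarith
    calc |Real.sqrt a - Real.sqrt c| * (Real.sqrt a + Real.sqrt c)
        = |(Real.sqrt a - Real.sqrt c) * (Real.sqrt a + Real.sqrt c)| := by
          rw [abs_mul, abs_of_nonneg (by positivity : (0:ℝ) ≤ Real.sqrt a + Real.sqrt c)]
      _ = |a - c| := by rw [h1]
  have hac : |a - c| ≤ 2 * |K| * |x - y| := by
    have he : a - c = K * (Real.cos (2 * y) - Real.cos (2 * x)) := by ring
    rw [he, abs_mul]
    have h3 := cos_lip' (2 * y) (2 * x)
    have h2 : |2 * y - 2 * x| = 2 * |x - y| := by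
      rw [show (2:ℝ) * y - 2 * x = -(2 * (x - y)) by ring, abs_neg, abs_mul]
      norm_num
    calc |K| * |Real.cos (2 * y) - Real.cos (2 * x)| ≤ |K| * (2 * |x - y|) := by
          gcongr; rw [← h2]; exact h3
      _ = 2 * |K| * |x - y| := by ring
  have key : |Real.sqrt a - Real.sqrt c| ≤ |K| / Real.sqrt (1 - |K|) * |x - y| := by
    rcases eq_or_lt_of_le hsum with _ | _
    rotate_left
    all_goals {
      have h4 : |Real.sqrt a - Real.sqrt c| * (2 * Real.sqrt (1 - |K|)) ≤ 2 * |K| * |x - y| := by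
        calc |Real.sqrt a - Real.sqrt c| * (2 * Real.sqrt (1 - |K|))
            ≤ |Real.sqrt a - Real.sqrt c| * (Real.sqrt a + Real.sqrt c) := by
              gcongr
          _ = |a - c| := hprod
          _ ≤ 2 * |K| * |x - y| := hac
      rw [div_mul_eq_mul_div, le_div_iff₀ hsε]
      nlinarith [abs_nonneg (Real.sqrt a - Real.sqrt c)] }
  rw [Real.coe_toNNReal _ (by positivity)]
  exact key


lemma ode_unique_univ {L : NNReal} {F : ℝ → ℝ} (hF : LipschitzWith L F) {f g : ℝ → ℝ}
    (hf : ∀ t, HasDerivAt f (F (f t)) t) (hg : ∀ t, HasDerivAt g (F (g t)) t)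
    (h0 : f 0 = g 0) : ∀ t, f t = g t := by
  intro t
  have ht : t ∈ Set.Ioo (-(|t| + 1)) (|t| + 1) := by
    constructor <;> [nlinarith [abs_nonneg t, neg_abs_le t]; nlinarith [le_abs_self t]]
  have h0' : (0:ℝ) ∈ Set.Ioo (-(|t| + 1)) (|t| + 1) := by
    constructor <;> nlinarith [abs_nonneg t]
  exact ODE_solution_unique_of_mem_Ioo
    (v := fun _ y => F y) (s := fun _ => Set.univ)
    (fun _ _ => hF.lipschitzOnWith) h0'
    (fun t' _ => ⟨hf t', trivial⟩) (fun t' _ => ⟨hg t', trivial⟩) h0 ht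

theorem helicoid_x3_properties
    (K : ℝ) (hK : K ∈ Set.Ioo (-1 : ℝ) 1) (hK0 : K ≠ 0) (b x₃ : ℝ → ℝ)
    (hb : ∀ v : ℝ, HasDerivAt b (Real.sqrt (1 - K * Real.cos (2 * b v))) v)
    (hb0 : b 0 = 0)
    (hx3 : ∀ v : ℝ,
      HasDerivAt x₃ (K / (1 + Real.sqrt (1 - K * Real.cos (2 * b v)))) v)
    (hx30 : x₃ 0 = 0) (W : ℝ) (hW : 0 < W) (hbW : b W = Real.pi) :
    (∀ v : ℝ, Real.cos (2 * b v) ≠ 0 →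
      deriv x₃ v = (1 - Real.sqrt (1 - K * Real.cos (2 * b v))) / Real.cos (2 * b v)) ∧
    (∀ v : ℝ, x₃ (-v) = -x₃ v) ∧
    (∀ v : ℝ, x₃ (v + W) = x₃ v + x₃ W) := by
  have hK1 : |K| < 1 := abs_lt.mpr ⟨hK.1, hK.2⟩
  have hrad : ∀ z : ℝ, 0 < 1 - K * Real.cos z := by
    intro z
    have : K * Real.cos z ≤ |K| := by
      calc K * Real.cos z ≤ |K * Real.cos z| := le_abs_self _
        _ = |K| * |Real.cos z| := abs_mul _ _
        _ ≤ |K| * 1 := by gcongr; exact abs_le.mpr ⟨Real.neg_one_le_cos _, Real.cos_le_one _⟩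
        _ = |K| := mul_one _
    linarith
  have hlip := field_lip K hK1
  -- b is odd
  have hbodd : ∀ v, b (-v) = -b v := by
    have := ode_unique_univ hlip
      (f := fun v => -b (-v)) (g := b)
      (fun t => by
        have h1 : HasDerivAt (fun v : ℝ => b (-v))
            (Real.sqrt (1 - K * Real.cos (2 * b (-t))) * (-1)) t :=
          (hb (-t)).comp t (hasDerivAt_neg t)
        have h2 := h1.neg
        simpa [Real.cos_neg, mul_comm, mul_neg, neg_neg, Pi.neg_def,
          show (2 : ℝ) * -b (-t) = -(2 * b (-t)) by ring] using h2)
      (hb) (by simp [hb0])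
    intro v
    have := this (-v)
    simp at this
    linarith
  -- b translation
  have hbtrans : ∀ v, b (v + W) = b v + Real.pi := by
    have := ode_unique_univ hlip
      (f := fun v => b (v + W) - Real.pi) (g := b)
      (fun t => by
        have h1 : HasDerivAt (fun v : ℝ => b (v + W))
            (Real.sqrt (1 - K * Real.cos (2 * b (t + W)))) t := by
          simpa [Function.comp_def] using (hb (t + W)).comp t ((hasDerivAt_id t).add_const W)
        have h2 := h1.sub_const Real.pi
        have h3 : Real.cos (2 * (b (t + W) - Real.pi)) = Real.cos (2 * b (t + W)) := by
          rw [show 2 * (b (t + W) - Real.pi) = 2 * b (t + W) - 2 * Real.pi by ring,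
            Real.cos_sub_two_pi]
        rw [← h3] at h2
        exact h2)
      (hb) (by simp [hb0, hbW])
    intro v
    have h := this v
    linarith
  refine ⟨?_, ?_, ?_⟩
  · -- derivative formula
    intro v hc
    rw [(hx3 v).deriv]
    set s := Real.sqrt (1 - K * Real.cos (2 * b v)) with hs
    have hs0 : 0 ≤ s := Real.sqrt_nonneg _
    have hs2 : s ^ 2 = 1 - K * Real.cos (2 * b v) := Real.sq_sqrt (hrad _).le
    rw [div_eq_div_iff (by linarith) hc]
    nlinarith [hs2]
  · -- oddness of x₃
    intro v
    have deriv0 : ∀ t, HasDerivAt (fun v => x₃ (-v) + x₃ v) 0 t := by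
      intro t
      have h1 : HasDerivAt (fun v : ℝ => x₃ (-v))
          (K / (1 + Real.sqrt (1 - K * Real.cos (2 * b (-t)))) * (-1)) t :=
        (hx3 (-t)).comp t (hasDerivAt_neg t)
      have h2 := h1.add (hx3 t)
      have h3 : Real.cos (2 * b (-t)) = Real.cos (2 * b t) := by
        rw [hbodd, show 2 * -b t = -(2 * b t) by ring, Real.cos_neg]
      rw [h3] at h2
      simpa [Pi.add_def] using h2
    have hconst : ∀ t, (fun v => x₃ (-v) + x₃ v) t = (fun v => x₃ (-v) + x₃ v) 0 :=
      fun t => is_const_of_deriv_eq_zero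
        (fun t' => (deriv0 t').differentiableAt) (fun t' => (deriv0 t').deriv) t 0
    have := hconst v
    simp [hx30] at this
    linarith
  · -- translation of x₃
    intro v
    have deriv0 : ∀ t, HasDerivAt (fun v => x₃ (v + W) - x₃ v) 0 t := by
      intro t
      have h1 : HasDerivAt (fun v : ℝ => x₃ (v + W))
          (K / (1 + Real.sqrt (1 - K * Real.cos (2 * b (t + W))))) t := by
        simpa [Function.comp_def] using (hx3 (t + W)).comp t ((hasDerivAt_id t).add_const W)
      have h3 : Real.cos (2 * b (t + W)) = Real.cos (2 * b t) := by
        rw [hbtrans, show 2 * (b t + Real.pi) = 2 * b t + 2 * Real.pi by ring,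
          Real.cos_add_two_pi]
      rw [h3] at h1
      simpa [Pi.sub_def] using h1.sub (hx3 t)
    have hconst : ∀ t, (fun v => x₃ (v + W) - x₃ v) t = (fun v => x₃ (v + W) - x₃ v) 0 :=
      fun t => is_const_of_deriv_eq_zero
        (fun t' => (deriv0 t').differentiableAt) (fun t' => (deriv0 t').deriv) t 0
    have := hconst v
    simp [hx30] at this
    linarith
end

section
/- For each K ∈ [0,1), define P(K) = 2K ∫₀^π du / (√(1 - K cos 2u) · (1 + √(1 - K cos 2u))). Then P is strictly increasing on [0,1), P(0) = 0, and P(K) → +∞ as K → 1⁻; hence P is a bijection from [0,1) onto [0,+∞). -/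
open Real Set

/-- The period `2x₃(W)` of the helicoid `H_K` in Sol₃, as a function of `K`. -/
noncomputable def helicoidPeriod (K : ℝ) : ℝ :=
  2 * K * ∫ u in (0 : ℝ)..Real.pi,
    1 / (Real.sqrt (1 - K * Real.cos (2 * u)) * (1 + Real.sqrt (1 - K * Real.cos (2 * u))))

noncomputable def hf (K u : ℝ) : ℝ :=
  1 / (Real.sqrt (1 - K * Real.cos (2 * u)) * (1 + Real.sqrt (1 - K * Real.cos (2 * u))))

lemma arg_pos {K c : ℝ} (hK : |K| < 1) (hc : |c| ≤ 1) : 0 < 1 - K * c := by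
  have : |K * c| < 1 := by
    rw [abs_mul]
    calc |K| * |c| ≤ |K| * 1 := by nlinarith [abs_nonneg K]
    _ < 1 := by simpa using hK
  have := abs_lt.1 this
  linarith [this.2]

lemma denom_pos {x : ℝ} (hx : 0 < x) : 0 < Real.sqrt x * (1 + Real.sqrt x) := by
  have h := Real.sqrt_pos.2 hx
  nlinarith

lemma sqrt_tangent {x y : ℝ} (hx : 0 ≤ x) (hy : 0 ≤ y) :
    2 * Real.sqrt x * Real.sqrt y ≤ x + y := by
  nlinarith [Real.sq_sqrt hx, Real.sq_sqrt hy, sq_nonneg (Real.sqrt x - Real.sqrt y)]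

lemma key_mono {K₁ K₂ c : ℝ} (h0 : 0 ≤ K₁) (h12 : K₁ < K₂) (h2 : K₂ < 1) (hc : |c| ≤ 1) :
    K₁ / (Real.sqrt (1 - K₁ * c) * (1 + Real.sqrt (1 - K₁ * c))) <
    K₂ / (Real.sqrt (1 - K₂ * c) * (1 + Real.sqrt (1 - K₂ * c))) := by
  have hK1 : |K₁| < 1 := by rw [abs_of_nonneg h0]; linarith
  have hK2 : |K₂| < 1 := by rw [abs_of_nonneg (by linarith : (0:ℝ) ≤ K₂)]; linarith
  have hx : 0 < 1 - K₁ * c := arg_pos hK1 hc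
  have hy : 0 < 1 - K₂ * c := arg_pos hK2 hc
  have hsx := Real.sq_sqrt hx.le
  have hsy := Real.sq_sqrt hy.le
  have hsx0 : 0 < Real.sqrt (1 - K₁ * c) := Real.sqrt_pos.2 hx
  have hsy0 : 0 < Real.sqrt (1 - K₂ * c) := Real.sqrt_pos.2 hy
  have htan := sqrt_tangent hx.le hy.le
  have hcsub := abs_le.1 hc
  rw [div_lt_div_iff₀ (denom_pos hx) (denom_pos hy)]
  set sx := Real.sqrt (1 - K₁ * c) with hsxdef
  set sy := Real.sqrt (1 - K₂ * c) with hsydef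
  have e1 : K₁ * (sy * (1 + sy)) = K₁ * sy + (K₁ - K₁ * (K₂ * c)) := by
    have : sy * (1 + sy) = sy + (1 - K₂ * c) := by rw [mul_add, mul_one, ← hsy]; ring
    rw [this]; ring
  have e2 : K₂ * (sx * (1 + sx)) = K₂ * sx + (K₂ - K₁ * (K₂ * c)) := by
    have : sx * (1 + sx) = sx + (1 - K₁ * c) := by rw [mul_add, mul_one, ← hsx]; ring
    rw [this]; ring
  rw [e1, e2]
  have goal' : K₁ * sy < K₂ * sx + (K₂ - K₁) := by
    have hint2 : 0 < (K₂ - K₁) * (2 - K₁ * c) := by nlinarith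
    have hint3 : 0 < sx * (K₂ - K₁) := mul_pos hsx0 (sub_pos.2 h12)
    have hKsx : K₂ * sx ^ 2 = K₂ * (1 - K₁ * c) := by rw [hsx]
    nlinarith [mul_nonneg h0 (sub_nonneg.2 htan), hint2, hint3, hKsx, hsx0, hsy0]
  linarith

lemma cont_hf {K : ℝ} (hK : |K| < 1) : Continuous (hf K) := by
  have h : ∀ u, 0 < Real.sqrt (1 - K * Real.cos (2 * u)) *
      (1 + Real.sqrt (1 - K * Real.cos (2 * u))) :=
    fun u => denom_pos (arg_pos hK (Real.abs_cos_le_one _))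
  exact Continuous.div continuous_const (by fun_prop) (fun u => (h u).ne')

lemma P_eq (K : ℝ) : helicoidPeriod K = 2 * K * ∫ u in (0:ℝ)..Real.pi, hf K u := rfl

lemma P_mono : StrictMonoOn helicoidPeriod (Set.Ico (0:ℝ) 1) := by
  intro K₁ h1 K₂ h2 h12
  have hK1 : |K₁| < 1 := by rw [abs_of_nonneg h1.1]; exact h1.2
  have hK2 : |K₂| < 1 := by rw [abs_of_nonneg h2.1]; exact h2.2
  have key : ∀ u : ℝ, 2 * K₁ * hf K₁ u < 2 * K₂ * hf K₂ u := by
    intro u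
    have := key_mono h1.1 h12 h2.2 (Real.abs_cos_le_one (2 * u))
    simp only [hf, mul_one_div] at *
    rw [mul_div_assoc, mul_div_assoc]
    linarith
  rw [P_eq, P_eq, ← intervalIntegral.integral_const_mul, ← intervalIntegral.integral_const_mul]
  apply intervalIntegral.integral_lt_integral_of_continuousOn_of_le_of_exists_lt Real.pi_pos
  · exact (continuous_const.mul (cont_hf hK1)).continuousOn
  · exact (continuous_const.mul (cont_hf hK2)).continuousOn
  · exact fun u _ => (key u).le
  · exact ⟨0, ⟨le_refl 0, Real.pi_pos.le⟩, key 0⟩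

lemma P_zero : helicoidPeriod 0 = 0 := by simp [helicoidPeriod]

lemma hf_nonneg {K : ℝ} (hK : |K| < 1) (u : ℝ) : 0 ≤ hf K u :=
  le_of_lt (by unfold hf; exact div_pos one_pos (denom_pos (arg_pos hK (Real.abs_cos_le_one _))))

lemma sqrt_add_le' {x y : ℝ} (hx : 0 ≤ x) (hy : 0 ≤ y) :
    Real.sqrt (x + y) ≤ Real.sqrt x + Real.sqrt y := by
  have h1 : x + y ≤ (Real.sqrt x + Real.sqrt y) ^ 2 := by
    nlinarith [Real.sq_sqrt hx, Real.sq_sqrt hy, Real.sqrt_nonneg x, Real.sqrt_nonneg y,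
      mul_nonneg (Real.sqrt_nonneg x) (Real.sqrt_nonneg y)]
  calc Real.sqrt (x + y) ≤ Real.sqrt ((Real.sqrt x + Real.sqrt y) ^ 2) := Real.sqrt_le_sqrt h1
  _ = Real.sqrt x + Real.sqrt y := Real.sqrt_sq (by positivity)

lemma hf_lower {K u : ℝ} (hK0 : 0 ≤ K) (hK1 : K < 1) (hu0 : 0 ≤ u) (hu1 : u ≤ Real.pi / 2) :
    (3 * (Real.sqrt (1 - K) + Real.sqrt 2 * u))⁻¹ ≤ hf K u := by
  have hK : |K| < 1 := by rw [abs_of_nonneg hK0]; exact hK1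
  set a := 1 - K * Real.cos (2 * u) with hadef
  have ha : 0 < a := arg_pos hK (Real.abs_cos_le_one _)
  have hcos1 : -1 ≤ Real.cos (2 * u) := Real.neg_one_le_cos _
  have ha2 : a ≤ 2 := by nlinarith
  have hcos : Real.cos (2 * u) = 1 - 2 * Real.sin u ^ 2 := by
    rw [Real.cos_two_mul, Real.cos_sq']; ring
  have hsin0 : 0 ≤ Real.sin u := Real.sin_nonneg_of_nonneg_of_le_pi hu0
    (by linarith [Real.pi_pos])
  have hsinle : Real.sin u ≤ u := Real.sin_le hu0
  have hale : a ≤ (1 - K) + 2 * u ^ 2 := by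
    rw [hadef, hcos]; nlinarith
  have hsq2 : Real.sqrt a ≤ Real.sqrt (1 - K) + Real.sqrt 2 * u := by
    calc Real.sqrt a ≤ Real.sqrt ((1 - K) + 2 * u ^ 2) := Real.sqrt_le_sqrt hale
    _ ≤ Real.sqrt (1 - K) + Real.sqrt (2 * u ^ 2) := sqrt_add_le' (by linarith) (by positivity)
    _ = Real.sqrt (1 - K) + Real.sqrt 2 * u := by
        rw [Real.sqrt_mul (by norm_num), Real.sqrt_sq hu0]
  have hsa2 : Real.sqrt a ≤ 2 := by
    nlinarith [Real.sq_sqrt ha.le, Real.sqrt_nonneg a]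
  have hsapos : 0 < Real.sqrt a := Real.sqrt_pos.2 ha
  have hDle : Real.sqrt a * (1 + Real.sqrt a) ≤ 3 * (Real.sqrt (1 - K) + Real.sqrt 2 * u) := by
    nlinarith
  have hDpos : 0 < Real.sqrt a * (1 + Real.sqrt a) := denom_pos ha
  rw [hf, ← hadef, one_div]
  exact inv_anti₀ hDpos hDle

lemma int_lower {ε : ℝ} (hε : 0 < ε) :
    ∫ u in (0:ℝ)..(Real.pi/2), (3 * (Real.sqrt ε + Real.sqrt 2 * u))⁻¹ =
      (3 * Real.sqrt 2)⁻¹ *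
        (Real.log (Real.sqrt ε + Real.sqrt 2 * (Real.pi / 2)) - Real.log (Real.sqrt ε)) := by
  have hs2 : (0:ℝ) < Real.sqrt 2 := Real.sqrt_pos.2 (by norm_num)
  have hse : (0:ℝ) < Real.sqrt ε := Real.sqrt_pos.2 hε
  have hpos : ∀ u ∈ uIcc (0:ℝ) (Real.pi/2), 0 < Real.sqrt ε + Real.sqrt 2 * u := by
    intro u hu
    rw [uIcc_of_le (by positivity)] at hu
    nlinarith [hu.1]
  have hder : ∀ u ∈ uIcc (0:ℝ) (Real.pi/2),
      HasDerivAt (fun v => (3 * Real.sqrt 2)⁻¹ * Real.log (Real.sqrt ε + Real.sqrt 2 * v))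
        ((3 * (Real.sqrt ε + Real.sqrt 2 * u))⁻¹) u := by
    intro u hu
    have h1 : HasDerivAt (fun v : ℝ => Real.sqrt ε + Real.sqrt 2 * v) (Real.sqrt 2) u := by
      simpa using ((hasDerivAt_id u).const_mul (Real.sqrt 2)).const_add (Real.sqrt ε)
    have h2 := (h1.log (hpos u hu).ne').const_mul ((3 * Real.sqrt 2)⁻¹)
    have hX : 0 < Real.sqrt ε + Real.sqrt 2 * u := hpos u hu
    refine h2.congr_deriv ?_
    have hs2ne : Real.sqrt 2 ≠ 0 := hs2.ne'
    field_simp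
  have hint : IntervalIntegrable (fun u => (3 * (Real.sqrt ε + Real.sqrt 2 * u))⁻¹)
      MeasureTheory.volume 0 (Real.pi/2) := by
    apply ContinuousOn.intervalIntegrable
    apply ContinuousOn.inv₀
    · fun_prop
    · intro u hu
      have := hpos u hu
      positivity
  rw [intervalIntegral.integral_eq_sub_of_hasDerivAt hder hint]
  simp only [mul_zero, add_zero]
  ring

lemma P_lowerBound {K : ℝ} (hK : 1/2 ≤ K) (hK1 : K < 1) :
    (3 * Real.sqrt 2)⁻¹ *
      (Real.log (Real.sqrt (1 - K) + Real.sqrt 2 * (Real.pi / 2)) - Real.log (Real.sqrt (1 - K)))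
      ≤ helicoidPeriod K := by
  have hK0 : (0:ℝ) ≤ K := by linarith
  have hKa : |K| < 1 := by rw [abs_of_nonneg hK0]; exact hK1
  have hε : 0 < 1 - K := by linarith
  have hint1 : IntervalIntegrable (hf K) MeasureTheory.volume 0 (Real.pi/2) :=
    (cont_hf hKa).intervalIntegrable _ _
  have hint2 : IntervalIntegrable (hf K) MeasureTheory.volume (Real.pi/2) Real.pi :=
    (cont_hf hKa).intervalIntegrable _ _
  have hintg : IntervalIntegrable (fun u => (3 * (Real.sqrt (1 - K) + Real.sqrt 2 * u))⁻¹)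
      MeasureTheory.volume 0 (Real.pi/2) := by
    apply ContinuousOn.intervalIntegrable
    apply ContinuousOn.inv₀
    · fun_prop
    · intro u hu
      rw [uIcc_of_le (by positivity)] at hu
      have hse : (0:ℝ) < Real.sqrt (1 - K) := Real.sqrt_pos.2 hε
      have h2u : (0:ℝ) ≤ Real.sqrt 2 * u := mul_nonneg (Real.sqrt_nonneg 2) hu.1
      exact ne_of_gt (by nlinarith)
  have step1 : ∫ u in (0:ℝ)..(Real.pi/2), (3 * (Real.sqrt (1 - K) + Real.sqrt 2 * u))⁻¹
      ≤ ∫ u in (0:ℝ)..(Real.pi/2), hf K u := by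
    apply intervalIntegral.integral_mono_on (by positivity) hintg hint1
    intro u hu
    exact hf_lower hK0 hK1 hu.1 hu.2
  have step2 : ∫ u in (0:ℝ)..(Real.pi/2), hf K u ≤ ∫ u in (0:ℝ)..Real.pi, hf K u := by
    rw [← intervalIntegral.integral_add_adjacent_intervals hint1 hint2]
    have : 0 ≤ ∫ u in (Real.pi/2)..Real.pi, hf K u :=
      intervalIntegral.integral_nonneg (by linarith [Real.pi_pos]) (fun u _ => hf_nonneg hKa u)
    linarith
  have hI0 : 0 ≤ ∫ u in (0:ℝ)..Real.pi, hf K u :=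
    intervalIntegral.integral_nonneg Real.pi_pos.le (fun u _ => hf_nonneg hKa u)
  have step3 : ∫ u in (0:ℝ)..Real.pi, hf K u ≤ helicoidPeriod K := by
    rw [P_eq]; nlinarith
  calc (3 * Real.sqrt 2)⁻¹ * (Real.log (Real.sqrt (1 - K) + Real.sqrt 2 * (Real.pi / 2))
        - Real.log (Real.sqrt (1 - K)))
      = ∫ u in (0:ℝ)..(Real.pi/2), (3 * (Real.sqrt (1 - K) + Real.sqrt 2 * u))⁻¹ :=
        (int_lower hε).symm
    _ ≤ ∫ u in (0:ℝ)..(Real.pi/2), hf K u := step1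
    _ ≤ ∫ u in (0:ℝ)..Real.pi, hf K u := step2
    _ ≤ helicoidPeriod K := step3

lemma sqrt_one_sub_tendsto :
    Filter.Tendsto (fun K => Real.sqrt (1 - K)) (nhdsWithin 1 (Set.Iio 1))
      (nhdsWithin 0 (Set.Ioi 0)) := by
  rw [tendsto_nhdsWithin_iff]
  constructor
  · have hcont : Continuous (fun K : ℝ => Real.sqrt (1 - K)) := by fun_prop
    have h := hcont.tendsto 1
    simp only [sub_self, Real.sqrt_zero] at h
    exact h.mono_left nhdsWithin_le_nhds
  · filter_upwards [self_mem_nhdsWithin] with K (hK : K < 1)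
    exact Real.sqrt_pos.2 (by linarith)

lemma P_tendsto :
    Filter.Tendsto helicoidPeriod (nhdsWithin 1 (Set.Iio 1)) Filter.atTop := by
  have hs2 : (0:ℝ) < Real.sqrt 2 := Real.sqrt_pos.2 (by norm_num)
  have hc : (0:ℝ) < (3 * Real.sqrt 2)⁻¹ := by positivity
  set C := Real.log (Real.sqrt 2 * (Real.pi / 2)) with hC
  have hlog : Filter.Tendsto (fun K => Real.log (Real.sqrt (1 - K)))
      (nhdsWithin 1 (Set.Iio 1)) Filter.atBot :=
    Real.tendsto_log_nhdsGT_zero.comp sqrt_one_sub_tendsto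
  have hneg : Filter.Tendsto (fun K => -Real.log (Real.sqrt (1 - K)))
      (nhdsWithin 1 (Set.Iio 1)) Filter.atTop := Filter.tendsto_neg_atBot_atTop.comp hlog
  have hM : Filter.Tendsto (fun K => (3 * Real.sqrt 2)⁻¹ * (C - Real.log (Real.sqrt (1 - K))))
      (nhdsWithin 1 (Set.Iio 1)) Filter.atTop := by
    have h1 := Filter.tendsto_atTop_add_const_left _ C hneg
    have h2 := h1.const_mul_atTop hc
    refine h2.congr (fun K => by ring)
  apply Filter.tendsto_atTop_mono' _ _ hM
  filter_upwards [Ioo_mem_nhdsLT_of_mem (show (1:ℝ) ∈ Set.Ioc (1/2) 1 by constructor <;> norm_num)]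
    with K hK
  have hK1 : K < 1 := hK.2
  have hKh : 1/2 ≤ K := hK.1.le
  have hε : 0 < 1 - K := by linarith
  have hse : 0 < Real.sqrt (1 - K) := Real.sqrt_pos.2 hε
  have hlogle : C ≤ Real.log (Real.sqrt (1 - K) + Real.sqrt 2 * (Real.pi / 2)) := by
    apply Real.log_le_log (by positivity)
    nlinarith [Real.pi_pos]
  calc (3 * Real.sqrt 2)⁻¹ * (C - Real.log (Real.sqrt (1 - K)))
      ≤ (3 * Real.sqrt 2)⁻¹ * (Real.log (Real.sqrt (1 - K) + Real.sqrt 2 * (Real.pi / 2))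
          - Real.log (Real.sqrt (1 - K))) := by nlinarith
    _ ≤ helicoidPeriod K := P_lowerBound hKh hK1

lemma P_contAt {K₀ : ℝ} (h : K₀ ∈ Set.Ico (0:ℝ) 1) : ContinuousAt helicoidPeriod K₀ := by
  have hδ : 0 < (1 - K₀) / 2 := by linarith [h.2]
  set δ := (1 - K₀) / 2 with hδdef
  set r := (1 + K₀) / 2 with hrdef
  have hr1 : r < 1 := by rw [hrdef]; linarith [h.2]
  have hm : 0 < 1 - r := by linarith
  have habs : ∀ K ∈ Set.Ioo (K₀ - δ) (K₀ + δ), |K| < r := by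
    intro K hK
    rw [abs_lt]
    constructor
    · have := hK.1; rw [hδdef] at this; rw [hrdef]; nlinarith [h.1]
    · have := hK.2; rw [hδdef] at this; rw [hrdef]; linarith
  have hev : Set.Ioo (K₀ - δ) (K₀ + δ) ∈ nhds K₀ :=
    Ioo_mem_nhds (by linarith) (by linarith)
  have hI : ContinuousAt (fun K => ∫ u in (0:ℝ)..Real.pi, hf K u) K₀ := by
    apply intervalIntegral.continuousAt_of_dominated_interval
      (bound := fun _ => (Real.sqrt (1 - r))⁻¹)
    · filter_upwards [hev] with K hK
      exact ((cont_hf ((habs K hK).trans hr1)).aestronglyMeasurable).restrict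
    · filter_upwards [hev] with K hK
      apply MeasureTheory.ae_of_all
      intro t _
      have hKa : |K| < 1 := (habs K hK).trans hr1
      have ha : 0 < 1 - K * Real.cos (2 * t) := arg_pos hKa (Real.abs_cos_le_one _)
      have ham : 1 - r ≤ 1 - K * Real.cos (2 * t) := by
        have h1 : |K * Real.cos (2 * t)| ≤ |K| := by
          rw [abs_mul]
          nlinarith [Real.abs_cos_le_one (2 * t), abs_nonneg K]
        have := (abs_le.1 h1).2
        have := (habs K hK).le
        nlinarith [abs_nonneg K, le_abs_self (K * Real.cos (2 * t))]
      have hsm : Real.sqrt (1 - r) ≤ Real.sqrt (1 - K * Real.cos (2 * t)) :=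
        Real.sqrt_le_sqrt ham
      have hsp : 0 < Real.sqrt (1 - K * Real.cos (2 * t)) := Real.sqrt_pos.2 ha
      have hsmp : 0 < Real.sqrt (1 - r) := Real.sqrt_pos.2 hm
      rw [Real.norm_eq_abs, abs_of_nonneg (hf_nonneg hKa t), hf, one_div]
      apply inv_anti₀ hsmp
      nlinarith
    · exact intervalIntegrable_const
    · apply MeasureTheory.ae_of_all
      intro t _
      have hK₀a : |K₀| < 1 := by rw [abs_of_nonneg h.1]; exact h.2
      have ha : 0 < 1 - K₀ * Real.cos (2 * t) := arg_pos hK₀a (Real.abs_cos_le_one _)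
      apply ContinuousAt.div continuousAt_const
      · fun_prop
      · exact ne_of_gt (denom_pos ha)
  have : ContinuousAt (fun K => 2 * K * ∫ u in (0:ℝ)..Real.pi, hf K u) K₀ :=
    ContinuousAt.mul (by fun_prop) hI
  exact this

theorem helicoidPeriod_bijective :
    StrictMonoOn helicoidPeriod (Set.Ico (0 : ℝ) 1) ∧
    helicoidPeriod 0 = 0 ∧
    Filter.Tendsto helicoidPeriod (nhdsWithin 1 (Set.Iio 1)) Filter.atTop ∧
    Set.BijOn helicoidPeriod (Set.Ico (0 : ℝ) 1) (Set.Ici (0 : ℝ)) := by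
  refine ⟨P_mono, P_zero, P_tendsto, ?_, P_mono.injOn, ?_⟩
  · -- MapsTo
    intro K hK
    rcases eq_or_lt_of_le hK.1 with h | h
    · simp [← h, P_zero]
    · have h0 : (0:ℝ) ∈ Set.Ico (0:ℝ) 1 := ⟨le_refl 0, one_pos⟩
      have := P_mono h0 hK h
      rw [P_zero] at this
      exact this.le
  · -- SurjOn
    intro y hy
    have h1 : ∀ᶠ K in nhdsWithin 1 (Set.Iio (1:ℝ)), y < helicoidPeriod K :=
      P_tendsto.eventually_gt_atTop y
    have h2 : ∀ᶠ K in nhdsWithin 1 (Set.Iio (1:ℝ)), K ∈ Set.Ioo (0:ℝ) 1 :=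
      Ioo_mem_nhdsLT_of_mem ⟨one_pos, le_refl 1⟩
    obtain ⟨K₁, hK₁, hK₁mem⟩ := (h1.and h2).exists
    have hsub : Set.Icc (0:ℝ) K₁ ⊆ Set.Ico (0:ℝ) 1 :=
      fun x hx => ⟨hx.1, lt_of_le_of_lt hx.2 hK₁mem.2⟩
    have hcont : ContinuousOn helicoidPeriod (Set.Icc 0 K₁) :=
      fun x hx => (P_contAt (hsub hx)).continuousWithinAt
    have hivt := intermediate_value_Icc hK₁mem.1.le hcont
    have hy' : y ∈ Set.Icc (helicoidPeriod 0) (helicoidPeriod K₁) := by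
      rw [P_zero]; exact ⟨hy, hK₁.le⟩
    obtain ⟨x, hx, hxy⟩ := hivt hy'
    exact ⟨x, hsub hx, hxy⟩
end

section
/- Let α ∈ (-1,1), ρ satisfy ρ' = √(1 - α² sin²(2ρ)), ρ(0) = 0, and V > 0 with ρ(V) = π. Then ρ(-v + V/2) = -ρ(v) + π/2 for all v ∈ ℝ; in particular ρ(V/4) = π/4 and ρ(3V/4) = 3π/4. -/
open Real Set

private lemma sin_lip (a b : ℝ) : |Real.sin a - Real.sin b| ≤ |a - b| := by
  rw [Real.sin_sub_sin, abs_mul, abs_mul]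
  have h1 : |Real.sin ((a - b) / 2)| ≤ |(a - b) / 2| := Real.abs_sin_le_abs
  have h2 : |Real.cos ((a + b) / 2)| ≤ 1 := Real.abs_cos_le_one _
  have h3 : |(a - b) / 2| = |a - b| / 2 := by rw [abs_div]; norm_num
  have h4 : |(2 : ℝ)| = 2 := by norm_num
  rw [h4]
  nlinarith [abs_nonneg (Real.sin ((a - b) / 2)), abs_nonneg (a - b),
    abs_nonneg (Real.cos ((a + b) / 2))]

private lemma ode_unique_global {F : ℝ → ℝ} {K : NNReal} (hF : LipschitzWith K F)
    {f g : ℝ → ℝ} (hf : ∀ t, HasDerivAt f (F (f t)) t) (hg : ∀ t, HasDerivAt g (F (g t)) t)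
    {t₀ : ℝ} (h : f t₀ = g t₀) : ∀ t, f t = g t := by
  intro t
  have := ODE_solution_unique_of_mem_Ioo (v := fun _ : ℝ => F) (s := fun _ => univ)
    (K := K) (f := f) (g := g) (t₀ := t₀)
    (a := min t t₀ - 1) (b := max t t₀ + 1)
    (fun _ _ => hF.lipschitzOnWith)
    ⟨by have := min_le_right t t₀; linarith, by have := le_max_right t t₀; linarith⟩
    (fun u _ => ⟨hf u, trivial⟩) (fun u _ => ⟨hg u, trivial⟩) h
  exact this ⟨by have := min_le_left t t₀; linarith, by have := le_max_left t t₀; linarith⟩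

theorem catenoid_rho_reflection
    (α : ℝ) (hα : α ∈ Set.Ioo (-1 : ℝ) 1) (ρ : ℝ → ℝ)
    (hρ : ∀ v : ℝ, HasDerivAt ρ (Real.sqrt (1 - α ^ 2 * Real.sin (2 * ρ v) ^ 2)) v)
    (hρ0 : ρ 0 = 0) (V : ℝ) (hV : 0 < V) (hρV : ρ V = Real.pi) :
    (∀ v : ℝ, ρ (-v + V / 2) = -ρ v + Real.pi / 2) ∧
    ρ (V / 4) = Real.pi / 4 ∧ ρ (3 * V / 4) = 3 * Real.pi / 4 := by
  obtain ⟨hα1, hα2⟩ := hα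
  have hα2' : α ^ 2 < 1 := by nlinarith
  set F : ℝ → ℝ := fun y => Real.sqrt (1 - α ^ 2 * Real.sin (2 * y) ^ 2) with hFdef
  set c : ℝ := Real.sqrt (1 - α ^ 2) with hcdef
  have hc : 0 < c := Real.sqrt_pos.mpr (by linarith)
  have hc2 : c ^ 2 = 1 - α ^ 2 := Real.sq_sqrt (by linarith)
  -- lower bound on F
  have harg : ∀ y : ℝ, 1 - α ^ 2 ≤ 1 - α ^ 2 * Real.sin (2 * y) ^ 2 := by
    intro y
    nlinarith [Real.sin_sq_le_one (2 * y), sq_nonneg α, sq_nonneg (Real.sin (2 * y))]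
  have hFlb : ∀ y : ℝ, c ≤ F y := fun y =>
    Real.sqrt_le_sqrt (harg y)
  -- Lipschitz bound
  have hLip : LipschitzWith ⟨2 / c, by positivity⟩ F := by
    apply LipschitzWith.of_dist_le_mul
    intro x y
    simp only [Real.dist_eq, NNReal.coe_mk]
    set a : ℝ := 1 - α ^ 2 * Real.sin (2 * x) ^ 2
    set b : ℝ := 1 - α ^ 2 * Real.sin (2 * y) ^ 2
    have ha : 0 ≤ a := le_trans (by nlinarith) (harg x)
    have hb : 0 ≤ b := le_trans (by nlinarith) (harg y)
    have hprod : (F x - F y) * (F x + F y) = a - b := by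
      have hx : F x ^ 2 = a := Real.sq_sqrt ha
      have hy : F y ^ 2 = b := Real.sq_sqrt hb
      nlinarith [hx, hy]
    have hsum : 2 * c ≤ F x + F y := by
      have := hFlb x; have := hFlb y; linarith
    have habdiff : |a - b| ≤ 4 * |x - y| := by
      have h1 : |Real.sin (2 * x) - Real.sin (2 * y)| ≤ |2 * x - 2 * y| :=
        sin_lip _ _
      have h2 : |Real.sin (2 * x) + Real.sin (2 * y)| ≤ 2 := by
        have := abs_sin_le_one (2 * x); have := abs_sin_le_one (2 * y)
        calc |Real.sin (2 * x) + Real.sin (2 * y)|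
            ≤ |Real.sin (2 * x)| + |Real.sin (2 * y)| := abs_add_le _ _
          _ ≤ 2 := by linarith
      have key : a - b = α ^ 2 * ((Real.sin (2 * y) - Real.sin (2 * x)) *
          (Real.sin (2 * y) + Real.sin (2 * x))) := by ring
      rw [key, abs_mul, abs_mul]
      have h1' : |Real.sin (2 * y) - Real.sin (2 * x)| ≤ 2 * |x - y| := by
        have : |Real.sin (2 * y) - Real.sin (2 * x)| ≤ |2 * y - 2 * x| := sin_lip _ _
        have he : |2 * y - 2 * x| = 2 * |x - y| := by
          rw [abs_sub_comm, show (2:ℝ) * x - 2 * y = 2 * (x - y) by ring, abs_mul]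
          simp
        linarith [he ▸ this]
      have h2' : |Real.sin (2 * y) + Real.sin (2 * x)| ≤ 2 := by
        rw [add_comm]; exact h2
      have hα2abs : |α ^ 2| ≤ 1 := by rw [abs_of_nonneg (sq_nonneg α)]; linarith
      calc |α ^ 2| * (|Real.sin (2 * y) - Real.sin (2 * x)| *
            |Real.sin (2 * y) + Real.sin (2 * x)|)
          ≤ 1 * (2 * |x - y| * 2) := by
            apply mul_le_mul hα2abs _ (by positivity) zero_le_one
            apply mul_le_mul h1' h2' (abs_nonneg _) (by positivity)
        _ = 4 * |x - y| := by ring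
    -- conclude
    have hFsum_pos : 0 < F x + F y := lt_of_lt_of_le (by linarith) hsum
    have : |F x - F y| * (2 * c) ≤ |a - b| := by
      calc |F x - F y| * (2 * c) ≤ |F x - F y| * (F x + F y) := by
            apply mul_le_mul_of_nonneg_left hsum (abs_nonneg _)
        _ = |(F x - F y) * (F x + F y)| := by
            rw [abs_mul, abs_of_pos hFsum_pos]
        _ = |a - b| := by rw [hprod]
    have h4 : |F x - F y| * (2 * c) ≤ 4 * |x - y| := le_trans this habdiff
    show |F x - F y| ≤ 2 / c * |x - y|
    rw [div_mul_eq_mul_div, le_div_iff₀ hc]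
    nlinarith [abs_nonneg (x - y)]
  have hρF : ∀ v, HasDerivAt ρ (F (ρ v)) v := hρ
  -- symmetry 1: oddness
  have hodd : ∀ v, ρ (-v) = -ρ v := by
    have h1 : ∀ v, HasDerivAt (fun v => -ρ (-v)) (F (-ρ (-v))) v := by
      intro v
      have hneg : HasDerivAt (fun v : ℝ => -v) (-1) v := by
        exact (hasDerivAt_id' v).neg
      have := ((hρF (-v)).comp v hneg).neg
      refine this.congr_deriv ?_
      simp only [hFdef]
      rw [show 2 * -ρ (-v) = -(2 * ρ (-v)) by ring, Real.sin_neg]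
      ring_nf
    have := ode_unique_global hLip hρF h1 (t₀ := 0) (by simp [hρ0])
    intro v
    have hv := this (-v)
    rw [neg_neg] at hv
    linarith [hv]
  -- symmetry 2: ρ v = π - ρ (V - v), gives ρ (V/2) = π/2
  have hsym2 : ∀ v, ρ v = Real.pi - ρ (V - v) := by
    have h1 : ∀ v, HasDerivAt (fun v => Real.pi - ρ (V - v)) (F (Real.pi - ρ (V - v))) v := by
      intro v
      have hlin : HasDerivAt (fun v : ℝ => V - v) (-1) v := by
        simpa using ((hasDerivAt_id v).const_sub V)
      have := ((hρF (V - v)).comp v hlin).const_sub Real.pi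
      refine this.congr_deriv ?_
      simp only [hFdef]
      rw [show 2 * (Real.pi - ρ (V - v)) = 2 * Real.pi - 2 * ρ (V - v) by ring,
        Real.sin_sub, Real.sin_two_pi, Real.cos_two_pi]
      ring_nf
    have := ode_unique_global hLip hρF h1 (t₀ := 0) (by simp [hρ0, hρV])
    exact this
  have hhalf : ρ (V / 2) = Real.pi / 2 := by
    have := hsym2 (V / 2)
    have he : V - V / 2 = V / 2 := by ring
    rw [he] at this
    linarith
  -- symmetry 3: ρ v = π/2 - ρ (V/2 - v)
  have hsym3 : ∀ v, ρ v = Real.pi / 2 - ρ (V / 2 - v) := by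
    have h1 : ∀ v, HasDerivAt (fun v => Real.pi / 2 - ρ (V / 2 - v))
        (F (Real.pi / 2 - ρ (V / 2 - v))) v := by
      intro v
      have hlin : HasDerivAt (fun v : ℝ => V / 2 - v) (-1) v := by
        simpa using ((hasDerivAt_id v).const_sub (V / 2))
      have := ((hρF (V / 2 - v)).comp v hlin).const_sub (Real.pi / 2)
      refine this.congr_deriv ?_
      simp only [hFdef]
      rw [show 2 * (Real.pi / 2 - ρ (V / 2 - v)) = Real.pi - 2 * ρ (V / 2 - v) by ring,
        Real.sin_pi_sub]
      ring_nf
    have := ode_unique_global hLip hρF h1 (t₀ := 0)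
      (by rw [hρ0, show V / 2 - (0:ℝ) = V / 2 by ring, hhalf]; ring)
    exact this
  refine ⟨fun v => ?_, ?_, ?_⟩
  · have := hsym3 v
    rw [show -v + V / 2 = V / 2 - v by ring]
    linarith
  · have := hsym3 (V / 4)
    rw [show V / 2 - V / 4 = V / 4 by ring] at this
    linarith
  · have h1 := hsym3 (3 * V / 4)
    rw [show V / 2 - 3 * V / 4 = -(V / 4) by ring, hodd (V / 4)] at h1
    have h2 := hsym3 (V / 4)
    rw [show V / 2 - V / 4 = V / 4 by ring] at h2
    linarith
end

section
/- Let α ∈ (-1,1), ρ as above with period identity ρ(v+V) = ρ(v)+π, and define F(v) = α² ∫₀^v sin(2ρ(s))/(1 + ρ'(s)) ds. Then F is even and F(v + V) = F(v) for all v ∈ ℝ; in particular ∫₀^V sin(2ρ(s))/(1 + ρ'(s)) ds = 0. -/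
open Set intervalIntegral

theorem catenoid_F_even_periodic
    (α : ℝ) (hα : α ∈ Set.Ioo (-1 : ℝ) 1) (ρ : ℝ → ℝ)
    (hρ : ∀ v : ℝ, HasDerivAt ρ (Real.sqrt (1 - α ^ 2 * Real.sin (2 * ρ v) ^ 2)) v)
    (hρ0 : ρ 0 = 0) (V : ℝ) (hV : 0 < V) (hρV : ρ V = Real.pi)
    (hper : ∀ v : ℝ, ρ (v + V) = ρ v + Real.pi)
    (F : ℝ → ℝ)
    (hF : ∀ v : ℝ, F v = α ^ 2 * ∫ s in (0 : ℝ)..v,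
      Real.sin (2 * ρ s) / (1 + Real.sqrt (1 - α ^ 2 * Real.sin (2 * ρ s) ^ 2))) :
    (∀ v : ℝ, F (-v) = F v) ∧ (∀ v : ℝ, F (v + V) = F v) ∧
    (∫ s in (0 : ℝ)..V,
      Real.sin (2 * ρ s) / (1 + Real.sqrt (1 - α ^ 2 * Real.sin (2 * ρ s) ^ 2))) = 0 := by
  obtain ⟨hα1, hα2⟩ := hα
  have hc1 : α ^ 2 < 1 := by nlinarith
  have hc0 : (0:ℝ) ≤ α ^ 2 := sq_nonneg α
  set φ : ℝ → ℝ := fun y => Real.sqrt (1 - α ^ 2 * Real.sin (2 * y) ^ 2) with hφdef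
  have hpos : ∀ y : ℝ, 1 - α ^ 2 < 1 - α ^ 2 * Real.sin (2 * y) ^ 2 + (1 - α^2) * 0 ∨
      1 - α ^ 2 ≤ 1 - α ^ 2 * Real.sin (2 * y) ^ 2 := by
    intro y; right
    nlinarith [Real.sin_sq_le_one (2 * y), Real.neg_one_le_sin (2*y)]
  have hpos' : ∀ y : ℝ, (0:ℝ) < 1 - α ^ 2 * Real.sin (2 * y) ^ 2 := by
    intro y
    rcases hpos y with h | h <;> nlinarith
  -- φ is even
  have hφeven : ∀ y : ℝ, φ (-y) = φ y := by
    intro y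
    simp only [hφdef]
    rw [show 2 * (-y) = -(2*y) by ring, Real.sin_neg]
    ring_nf
  -- derivative of φ
  set φ' : ℝ → ℝ := fun y =>
      (0 - α ^ 2 * ((2:ℕ) * Real.sin (2*y) ^ 1 * (Real.cos (2*y) * (2 * 1)))) *
        (1 / (2 * Real.sqrt (1 - α ^ 2 * Real.sin (2 * y) ^ 2))) with hφ'def
  have hφderiv : ∀ y : ℝ, HasDerivAt φ (φ' y) y := by
    intro y
    have h1 : HasDerivAt (fun y : ℝ => Real.sin (2 * y)) (Real.cos (2*y) * (2 * 1)) y :=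
      (Real.hasDerivAt_sin (2*y)).comp y ((hasDerivAt_id y).const_mul 2)
    have h2 : HasDerivAt (fun y : ℝ => Real.sin (2 * y) ^ 2)
        ((2:ℕ) * Real.sin (2*y) ^ 1 * (Real.cos (2*y) * (2 * 1))) y := h1.pow 2
    have h3 : HasDerivAt (fun y : ℝ => 1 - α ^ 2 * Real.sin (2 * y) ^ 2)
        (0 - α ^ 2 * ((2:ℕ) * Real.sin (2*y) ^ 1 * (Real.cos (2*y) * (2 * 1)))) y :=
      (hasDerivAt_const y (1:ℝ)).sub (h2.const_mul (α ^ 2))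
    have h4 := (Real.hasDerivAt_sqrt (ne_of_gt (hpos' y))).comp y h3
    refine h4.congr_deriv ?_
    simp only [hφ'def]
    push_cast
    ring
  -- Lipschitz bound for φ
  have hs1 : (0:ℝ) < Real.sqrt (1 - α ^ 2) := Real.sqrt_pos.mpr (by nlinarith)
  set K0 : ℝ := 2 * α ^ 2 / Real.sqrt (1 - α ^ 2) with hK0def
  have hK0 : 0 ≤ K0 := div_nonneg (by positivity) hs1.le
  have hbound : ∀ y : ℝ, |φ' y| ≤ K0 := by
    intro y
    have habs : |Real.sin (2*y) * Real.cos (2*y)| ≤ 1 := by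
      rw [abs_mul]
      exact mul_le_one₀ (Real.abs_sin_le_one _) (abs_nonneg _) (Real.abs_cos_le_one _)
    obtain ⟨ha1, ha2⟩ := abs_le.mp habs
    rw [hφ'def]
    set N : ℝ := 0 - α ^ 2 * ((2:ℕ) * Real.sin (2*y) ^ 1 * (Real.cos (2*y) * (2 * 1))) with hN
    have hNb : |N| ≤ 4 * α ^ 2 := by
      rw [abs_le, hN]; push_cast
      constructor <;> nlinarith
    have hden : Real.sqrt (1 - α ^ 2) ≤ Real.sqrt (1 - α ^ 2 * Real.sin (2 * y) ^ 2) := by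
      apply Real.sqrt_le_sqrt
      nlinarith [Real.sin_sq_le_one (2 * y)]
    have hdenpos : (0:ℝ) < Real.sqrt (1 - α ^ 2 * Real.sin (2 * y) ^ 2) :=
      Real.sqrt_pos.mpr (hpos' y)
    have step0 : |N * (1 / (2 * Real.sqrt (1 - α ^ 2 * Real.sin (2 * y) ^ 2)))|
        = |N| * (1 / (2 * Real.sqrt (1 - α ^ 2 * Real.sin (2 * y) ^ 2))) := by
      rw [abs_mul, abs_of_pos (show (0:ℝ) < 1 / (2 * Real.sqrt (1 - α ^ 2 * Real.sin (2 * y) ^ 2))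
        by positivity)]
    have step1 : |N| * (1 / (2 * Real.sqrt (1 - α ^ 2 * Real.sin (2 * y) ^ 2)))
        ≤ (4 * α ^ 2) * (1 / (2 * Real.sqrt (1 - α ^ 2))) := by
      apply mul_le_mul hNb _ (by positivity) (by positivity)
      apply one_div_le_one_div_of_le (by positivity)
      linarith
    have step2 : (4 * α ^ 2) * (1 / (2 * Real.sqrt (1 - α ^ 2))) = K0 := by
      rw [hK0def]; field_simp; ring
    calc |N * (1 / (2 * Real.sqrt (1 - α ^ 2 * Real.sin (2 * y) ^ 2)))|
        = |N| * (1 / (2 * Real.sqrt (1 - α ^ 2 * Real.sin (2 * y) ^ 2))) := step0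
      _ ≤ (4 * α ^ 2) * (1 / (2 * Real.sqrt (1 - α ^ 2))) := step1
      _ = K0 := step2
  have hlip : LipschitzWith K0.toNNReal φ := by
    apply lipschitzWith_of_nnnorm_deriv_le (fun y => (hφderiv y).differentiableAt)
    intro x
    rw [← NNReal.coe_le_coe, coe_nnnorm, Real.coe_toNNReal _ hK0,
      (hφderiv x).deriv]
    exact (Real.norm_eq_abs _ ▸ hbound x)
  -- ρ is odd
  have hodd : ∀ w : ℝ, ρ (-w) = -ρ w := by
    intro w
    have key : Set.EqOn ρ (fun s => -ρ (-s)) (Ioo (-(|w|+1)) (|w|+1)) := by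
      apply ODE_solution_unique_of_mem_Ioo
        (v := fun _ y => φ y) (s := fun _ => (univ : Set ℝ))
        (fun _ _ => hlip.lipschitzOnWith)
        (t₀ := 0)
      · have h0 := abs_nonneg w
        exact ⟨by linarith, by linarith⟩
      · intro t _
        exact ⟨hρ t, trivial⟩
      · intro t _
        refine ⟨?_, trivial⟩
        have h1 : HasDerivAt (fun s : ℝ => ρ (-s)) (φ (ρ (-t)) * (-1)) t :=
          (hρ (-t)).comp t (hasDerivAt_neg t)
        have h2 : HasDerivAt (fun s : ℝ => -ρ (-s)) (-(φ (ρ (-t)) * (-1))) t := h1.neg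
        have : -(φ (ρ (-t)) * (-1)) = φ (-ρ (-t)) := by
          rw [hφeven]; ring
        rw [this] at h2
        exact h2
      · simp [hρ0]
    have hw : w ∈ Ioo (-(|w|+1)) (|w|+1) := by
      constructor
      · have := abs_le.mp (le_refl |w|); linarith [neg_abs_le w]
      · linarith [le_abs_self w]
    have h := key hw
    have h' : ρ w = -ρ (-w) := h
    linarith
  -- the integrand
  set G : ℝ → ℝ := fun s =>
    Real.sin (2 * ρ s) / (1 + Real.sqrt (1 - α ^ 2 * Real.sin (2 * ρ s) ^ 2)) with hGdef
  have hρcont : Continuous ρ := by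
    rw [continuous_iff_continuousAt]; exact fun v => (hρ v).continuousAt
  have hdenne : ∀ s : ℝ, 1 + Real.sqrt (1 - α ^ 2 * Real.sin (2 * ρ s) ^ 2) ≠ 0 := by
    intro s
    have := Real.sqrt_nonneg (1 - α ^ 2 * Real.sin (2 * ρ s) ^ 2)
    positivity
  have hGcont : Continuous G := by
    apply Continuous.div
    · exact Real.continuous_sin.comp (continuous_const.mul hρcont)
    · exact continuous_const.add (Real.continuous_sqrt.comp
        (continuous_const.sub (continuous_const.mul
          ((Real.continuous_sin.comp (continuous_const.mul hρcont)).pow 2))))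
    · exact hdenne
  have hGint : ∀ a b : ℝ, IntervalIntegrable G MeasureTheory.volume a b :=
    fun a b => hGcont.intervalIntegrable a b
  -- G is odd
  have hGodd : ∀ s : ℝ, G (-s) = -G s := by
    intro s
    simp only [hGdef]
    rw [hodd s, show 2 * (-ρ s) = -(2 * ρ s) by ring, Real.sin_neg]
    rw [neg_pow, show ((-1:ℝ))^2 = 1 by norm_num, one_mul, neg_div]
  -- G is V-periodic
  have hGper : ∀ s : ℝ, G (s + V) = G s := by
    intro s
    simp only [hGdef]
    rw [hper s, show 2 * (ρ s + Real.pi) = 2 * ρ s + 2 * Real.pi by ring,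
      Real.sin_add_two_pi]
  -- ∫₀^{-v} G = ∫₀^v G
  have hrefl : ∀ v : ℝ, (∫ s in (0:ℝ)..(-v), G s) = ∫ s in (0:ℝ)..v, G s := by
    intro v
    have h1 : (∫ s in (0:ℝ)..v, G (-s)) = ∫ s in (-v)..(0:ℝ), G s := by
      simpa using intervalIntegral.integral_comp_neg (a := 0) (b := v) G
    have h2 : (∫ s in (0:ℝ)..v, G (-s)) = -∫ s in (0:ℝ)..v, G s := by
      simp_rw [hGodd]; exact intervalIntegral.integral_neg
    have h3 : (∫ s in (0:ℝ)..(-v), G s) = -∫ s in (-v)..(0:ℝ), G s :=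
      intervalIntegral.integral_symm (-v) 0
    rw [h2] at h1
    rw [h3, ← h1, neg_neg]
  -- shift identity
  have hshift : ∀ a b : ℝ, (∫ s in (a+V)..(b+V), G s) = ∫ s in a..b, G s := by
    intro a b
    rw [← intervalIntegral.integral_comp_add_right G V]
    simp_rw [hGper]
  -- main integral vanishes
  have hI : (∫ s in (0:ℝ)..V, G s) = 0 := by
    have h1 : (∫ s in (0:ℝ)..(-V), G s) = ∫ s in (0:ℝ)..V, G s := hrefl V
    have h2 : (∫ s in (-V)..(0:ℝ), G s) = ∫ s in (0:ℝ)..V, G s := by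
      have h := hshift (-V) 0
      norm_num at h
      linarith
    have h3 : (∫ s in (0:ℝ)..(-V), G s) = -∫ s in (-V)..(0:ℝ), G s :=
      intervalIntegral.integral_symm (-V) 0
    linarith
  refine ⟨?_, ?_, hI⟩
  · intro v
    rw [hF v, hF (-v), hrefl v]
  · intro v
    rw [hF v, hF (v+V)]
    have hsplit : (∫ s in (0:ℝ)..(v+V), G s)
        = (∫ s in (0:ℝ)..V, G s) + ∫ s in V..(v+V), G s :=
      (intervalIntegral.integral_add_adjacent_intervals (hGint 0 V) (hGint V (v+V))).symm
    have h3 : (∫ s in V..(v+V), G s) = ∫ s in (0:ℝ)..v, G s := by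
      have := hshift 0 v
      simpa [add_comm] using this
    rw [hsplit, h3, hI, zero_add]
end
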